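/- Let d ≥ 2 and let (v,M), (v',M') ∈ ℝ^d ⊕ so(d,ℝ) both satisfy: v_j = 0 for 1 ≤ j ≤ d−1, v_d ≠ 0, M_{j,j+1} ≠ 0 for 1 ≤ j ≤ d−1, and M_{j,k} = 0 for k > j+1 (and likewise for (v',M')). Then there exists A ∈ O_d(ℝ) with A v = v' and A M Aᵀ = M' if and only if ⟨M^k v, M^k v⟩ = ⟨(M')^k v', (M')^k v'⟩ for all k = 0, 1, …, d−1, where ⟨·,·⟩ is the standard inner product on ℝ^d (the case k = 0 reading ⟨v,v⟩ = ⟨v',v'⟩). Moreover, when such an A exists it can be chosen to be a diagonal matrix with diagonal entries in {−1, 1}. (Separation of O_d(ℝ)-orbits on the relative section by the polynomial invariants ⟨M^k v, M^k v⟩.) -/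

import Mathlib

open Matrix

namespace Stmt2Aux

/-- Triangular structure of the vectors `M^k v`. -/
lemma tri {d : ℕ} (hd : 2 ≤ d) (v : Fin d → ℝ) (M : Matrix (Fin d) (Fin d) ℝ)
    (hv1 : ∀ j : Fin d, (j : ℕ) + 1 < d → v j = 0)
    (hv2 : v ⟨d - 1, Nat.sub_lt (by omega) Nat.one_pos⟩ ≠ 0)
    (hM1 : ∀ j k : Fin d, (k : ℕ) = (j : ℕ) + 1 → M j k ≠ 0)
    (hM2 : ∀ j k : Fin d, (j : ℕ) + 1 < (k : ℕ) → M j k = 0) :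
    ∀ k : ℕ, k < d →
      (∀ j : Fin d, (j : ℕ) + k + 1 < d → ((M ^ k) *ᵥ v) j = 0) ∧
      (∀ h : d - 1 - k < d, ((M ^ k) *ᵥ v) ⟨d - 1 - k, h⟩ ≠ 0) := by
  intro k
  induction k with
  | zero =>
    intro _
    refine ⟨fun j hj => by simpa using hv1 j (by omega), fun h => ?_⟩
    have he : (⟨d - 1 - 0, h⟩ : Fin d) = ⟨d - 1, by omega⟩ := by
      apply Fin.ext; simp
    rw [pow_zero, one_mulVec, he]
    exact hv2
  | succ k ih =>
    intro hk1
    obtain ⟨iha, ihb⟩ := ih (by omega)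
    have hw : (M ^ (k+1)) *ᵥ v = M *ᵥ ((M ^ k) *ᵥ v) := by
      rw [mulVec_mulVec, ← pow_succ']
    constructor
    · intro j hj
      rw [hw]
      show (M j) ⬝ᵥ ((M ^ k) *ᵥ v) = 0
      apply Finset.sum_eq_zero
      intro l _
      by_cases hl : (l : ℕ) + k + 1 < d
      · rw [iha l hl, mul_zero]
      · rw [hM2 j l (by omega), zero_mul]
    · intro h
      rw [hw]
      have hl0 : d - 1 - k < d := by omega
      set j : Fin d := ⟨d - 1 - (k+1), h⟩ with hjdef
      set l0 : Fin d := ⟨d - 1 - k, hl0⟩ with hl0def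
      have hjval : (j : ℕ) = d - 1 - (k+1) := rfl
      have hl0val : (l0 : ℕ) = d - 1 - k := rfl
      have hsum : (M *ᵥ ((M ^ k) *ᵥ v)) j = M j l0 * ((M ^ k) *ᵥ v) l0 := by
        show (M j) ⬝ᵥ ((M ^ k) *ᵥ v) = _
        apply Finset.sum_eq_single
        · intro l _ hne
          by_cases hl : (l : ℕ) + k + 1 < d
          · rw [iha l hl, mul_zero]
          · have hlne : (l : ℕ) ≠ d - 1 - k := fun hh => hne (Fin.ext (by rw [hh, hl0val]))
            rw [hM2 j l (by rw [hjval]; omega), zero_mul]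
        · intro hmem; exact absurd (Finset.mem_univ l0) hmem
      rw [hsum]
      exact mul_ne_zero (hM1 j l0 (by rw [hjval, hl0val]; omega)) (ihb hl0)

lemma dot_shift {d : ℕ} (M : Matrix (Fin d) (Fin d) ℝ) (hM : Mᵀ = -M) (v : Fin d → ℝ) :
    ∀ j i : ℕ, ((M ^ i) *ᵥ v) ⬝ᵥ ((M ^ j) *ᵥ v)
      = (-1 : ℝ) ^ j * (((M ^ (i + j)) *ᵥ v) ⬝ᵥ v) := by
  intro j
  induction j with
  | zero => intro i; simp
  | succ j ih =>
    intro i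
    have h1 : (M ^ (j+1)) *ᵥ v = M *ᵥ ((M ^ j) *ᵥ v) := by
      rw [mulVec_mulVec, ← pow_succ']
    have h2 : ((M ^ i) *ᵥ v) ᵥ* M = -((M ^ (i+1)) *ᵥ v) := by
      rw [← mulVec_transpose, hM, neg_mulVec, mulVec_mulVec, ← pow_succ']
    rw [h1, dotProduct_mulVec, h2, neg_dotProduct, ih (i+1)]
    rw [show i + 1 + j = i + (j + 1) by omega, pow_succ]
    ring

lemma dot_odd {d : ℕ} (M : Matrix (Fin d) (Fin d) ℝ) (hM : Mᵀ = -M) (v : Fin d → ℝ)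
    {m : ℕ} (hm : Odd m) : ((M ^ m) *ᵥ v) ⬝ᵥ v = 0 := by
  have h := dot_shift M hM v m 0
  rw [pow_zero, one_mulVec, zero_add, hm.neg_one_pow, dotProduct_comm] at h
  linarith

lemma pair_eq {d : ℕ} (M M' : Matrix (Fin d) (Fin d) ℝ) (v v' : Fin d → ℝ)
    (hM : Mᵀ = -M) (hM' : M'ᵀ = -M')
    (hinv : ∀ k : ℕ, k < d →
      ((M ^ k) *ᵥ v) ⬝ᵥ ((M ^ k) *ᵥ v) = ((M' ^ k) *ᵥ v') ⬝ᵥ ((M' ^ k) *ᵥ v')) :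
    ∀ i j : ℕ, i + j < 2 * d →
      ((M ^ i) *ᵥ v) ⬝ᵥ ((M ^ j) *ᵥ v) = ((M' ^ i) *ᵥ v') ⬝ᵥ ((M' ^ j) *ᵥ v') := by
  have base : ∀ m : ℕ, m < 2 * d → ((M ^ m) *ᵥ v) ⬝ᵥ v = ((M' ^ m) *ᵥ v') ⬝ᵥ v' := by
    intro m hm
    rcases Nat.even_or_odd m with he | ho
    · obtain ⟨k, hk⟩ := he
      subst hk
      have h1 := dot_shift M hM v k k
      have h2 := dot_shift M' hM' v' k k
      have h3 := hinv k (by omega)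
      have hne : ((-1 : ℝ) ^ k) ≠ 0 := pow_ne_zero _ (by norm_num)
      exact mul_left_cancel₀ hne (h1.symm.trans (h3.trans h2))
    · rw [dot_odd M hM v ho, dot_odd M' hM' v' ho]
  intro i j hij
  rw [dot_shift M hM v j i, dot_shift M' hM' v' j i, base (i + j) hij]

end Stmt2Aux

/-- Separation of `O_d(ℝ)`-orbits on the relative section by the
polynomial invariants `⟨M^k v, M^k v⟩`, `k = 0, …, d-1`; moreover, when two points
of the section lie on the same orbit, the relating orthogonal matrix can be chosen
diagonal with entries `±1`. (0-based indices.) -/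
theorem stmt2 {d : ℕ} (hd : 2 ≤ d)
    (v v' : Fin d → ℝ) (M M' : Matrix (Fin d) (Fin d) ℝ)
    (hMskew : Mᵀ = -M) (hM'skew : M'ᵀ = -M')
    (hv1 : ∀ j : Fin d, (j : ℕ) + 1 < d → v j = 0)
    (hv2 : v ⟨d - 1, by omega⟩ ≠ 0)
    (hM1 : ∀ j k : Fin d, (k : ℕ) = (j : ℕ) + 1 → M j k ≠ 0)
    (hM2 : ∀ j k : Fin d, (j : ℕ) + 1 < (k : ℕ) → M j k = 0)
    (hv1' : ∀ j : Fin d, (j : ℕ) + 1 < d → v' j = 0)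
    (hv2' : v' ⟨d - 1, by omega⟩ ≠ 0)
    (hM1' : ∀ j k : Fin d, (k : ℕ) = (j : ℕ) + 1 → M' j k ≠ 0)
    (hM2' : ∀ j k : Fin d, (j : ℕ) + 1 < (k : ℕ) → M' j k = 0) :
    ((∃ A : Matrix (Fin d) (Fin d) ℝ,
        A * Aᵀ = 1 ∧ A.mulVec v = v' ∧ A * M * Aᵀ = M') ↔
      (∀ k : ℕ, k < d →
        dotProduct ((M ^ k).mulVec v) ((M ^ k).mulVec v) =
          dotProduct ((M' ^ k).mulVec v') ((M' ^ k).mulVec v'))) ∧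
    ((∃ A : Matrix (Fin d) (Fin d) ℝ,
        A * Aᵀ = 1 ∧ A.mulVec v = v' ∧ A * M * Aᵀ = M') →
      ∃ A : Matrix (Fin d) (Fin d) ℝ,
        (∀ i j : Fin d, i ≠ j → A i j = 0) ∧
        (∀ i : Fin d, A i i = 1 ∨ A i i = -1) ∧
        A * Aᵀ = 1 ∧ A.mulVec v = v' ∧ A * M * Aᵀ = M') := by
  classical
  -- forward direction
  have fwd : (∃ A : Matrix (Fin d) (Fin d) ℝ,
      A * Aᵀ = 1 ∧ A.mulVec v = v' ∧ A * M * Aᵀ = M') →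
      (∀ k : ℕ, k < d →
        ((M ^ k) *ᵥ v) ⬝ᵥ ((M ^ k) *ᵥ v) = ((M' ^ k) *ᵥ v') ⬝ᵥ ((M' ^ k) *ᵥ v')) := by
    rintro ⟨A, hA1, hAv, hAM⟩ k _
    have hA2 : Aᵀ * A = 1 := mul_eq_one_comm.mp hA1
    have hpow : ∀ n : ℕ, M' ^ n = A * M ^ n * Aᵀ := by
      intro n
      induction n with
      | zero => simp [hA1]
      | succ n ihn =>
        rw [pow_succ, pow_succ, ihn, ← hAM]
        calc A * M ^ n * Aᵀ * (A * M * Aᵀ)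
            = A * M ^ n * (Aᵀ * A) * M * Aᵀ := by simp only [Matrix.mul_assoc]
          _ = A * (M ^ n * M) * Aᵀ := by rw [hA2, Matrix.mul_one]; simp only [Matrix.mul_assoc]
    have hvec : (M' ^ k) *ᵥ v' = A *ᵥ ((M ^ k) *ᵥ v) := by
      rw [hpow k, ← hAv, mulVec_mulVec, mulVec_mulVec]
      have hm : A * M ^ k * Aᵀ * A = A * M ^ k := by
        rw [Matrix.mul_assoc, hA2, Matrix.mul_one]
      rw [hm]
    rw [hvec]
    set x := (M ^ k) *ᵥ v
    have hxx : (A *ᵥ x) ᵥ* A = x := by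
      rw [← mulVec_transpose, mulVec_mulVec, hA2, one_mulVec]
    have hfin : (A *ᵥ x) ⬝ᵥ (A *ᵥ x) = x ⬝ᵥ x := by
      rw [dotProduct_mulVec, hxx]
    rw [hfin]
  -- backward direction (with diagonal conclusion)
  have bwd : (∀ k : ℕ, k < d →
      ((M ^ k) *ᵥ v) ⬝ᵥ ((M ^ k) *ᵥ v) = ((M' ^ k) *ᵥ v') ⬝ᵥ ((M' ^ k) *ᵥ v')) →
      ∃ A : Matrix (Fin d) (Fin d) ℝ,
        (∀ i j : Fin d, i ≠ j → A i j = 0) ∧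
        (∀ i : Fin d, A i i = 1 ∨ A i i = -1) ∧
        A * Aᵀ = 1 ∧ A.mulVec v = v' ∧ A * M * Aᵀ = M' := by
    intro hinv
    have pear := Stmt2Aux.pair_eq M M' v v' hMskew hM'skew hinv
    have tr := Stmt2Aux.tri hd v M hv1 hv2 hM1 hM2
    have tr' := Stmt2Aux.tri hd v' M' hv1' hv2' hM1' hM2'
    set P : Matrix (Fin d) (Fin d) ℝ := Matrix.of fun j k => ((M ^ (k : ℕ)) *ᵥ v) j with hPdef
    set P' : Matrix (Fin d) (Fin d) ℝ := Matrix.of fun j k => ((M' ^ (k : ℕ)) *ᵥ v') j with hP'def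
    set Q : Matrix (Fin d) (Fin d) ℝ := P.submatrix Fin.rev id with hQdef
    set Q' : Matrix (Fin d) (Fin d) ℝ := P'.submatrix Fin.rev id with hQ'def
    have hQtri : Q.BlockTriangular id := by
      intro i j hij
      show P (Fin.rev i) j = 0
      apply (tr (j : ℕ) j.isLt).1
      have h1 : ((Fin.rev i : Fin d) : ℕ) = d - ((i : ℕ) + 1) := Fin.val_rev i
      have := i.isLt
      have hji : (j : ℕ) < (i : ℕ) := hij
      omega
    have hQ'tri : Q'.BlockTriangular id := by
      intro i j hij
      show P' (Fin.rev i) j = 0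
      apply (tr' (j : ℕ) j.isLt).1
      have h1 : ((Fin.rev i : Fin d) : ℕ) = d - ((i : ℕ) + 1) := Fin.val_rev i
      have := i.isLt
      have hji : (j : ℕ) < (i : ℕ) := hij
      omega
    have hQdiag : ∀ i : Fin d, Q i i ≠ 0 := by
      intro i
      have h2 : d - 1 - (i : ℕ) < d := by omega
      have h3 := (tr (i : ℕ) i.isLt).2 h2
      show P (Fin.rev i) i ≠ 0
      have he : Fin.rev i = (⟨d - 1 - (i : ℕ), h2⟩ : Fin d) := Fin.ext (by rw [Fin.val_rev]; show d - ((i : ℕ) + 1) = d - 1 - (i : ℕ); omega)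
      rw [he]
      exact h3
    have hQ'diag : ∀ i : Fin d, Q' i i ≠ 0 := by
      intro i
      have h2 : d - 1 - (i : ℕ) < d := by omega
      have h3 := (tr' (i : ℕ) i.isLt).2 h2
      show P' (Fin.rev i) i ≠ 0
      have he : Fin.rev i = (⟨d - 1 - (i : ℕ), h2⟩ : Fin d) := Fin.ext (by rw [Fin.val_rev]; show d - ((i : ℕ) + 1) = d - 1 - (i : ℕ); omega)
      rw [he]
      exact h3
    have hdetQ : Q.det ≠ 0 := by
      rw [Matrix.det_of_upperTriangular hQtri]
      exact Finset.prod_ne_zero_iff.mpr fun i _ => hQdiag i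
    have hdetQ' : Q'.det ≠ 0 := by
      rw [Matrix.det_of_upperTriangular hQ'tri]
      exact Finset.prod_ne_zero_iff.mpr fun i _ => hQ'diag i
    have hQP : Q = P.submatrix (⇑(Fin.revPerm : Equiv.Perm (Fin d))) id := rfl
    have hQP' : Q' = P'.submatrix (⇑(Fin.revPerm : Equiv.Perm (Fin d))) id := rfl
    have hdetP : IsUnit P.det := by
      rw [hQP, Matrix.det_permute] at hdetQ
      exact isUnit_iff_ne_zero.mpr (right_ne_zero_of_mul hdetQ)
    have hdetP' : IsUnit P'.det := by
      rw [hQP', Matrix.det_permute] at hdetQ'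
      exact isUnit_iff_ne_zero.mpr (right_ne_zero_of_mul hdetQ')
    have hPP : P * P⁻¹ = 1 := Matrix.mul_nonsing_inv P hdetP
    have hPP2 : P⁻¹ * P = 1 := Matrix.nonsing_inv_mul P hdetP
    have hPP' : P' * P'⁻¹ = 1 := Matrix.mul_nonsing_inv P' hdetP'
    have hPP2' : P'⁻¹ * P' = 1 := Matrix.nonsing_inv_mul P' hdetP'
    -- Gram matrices agree
    have hGapp : ∀ i j : Fin d, (Pᵀ * P) i j = ((M ^ (i : ℕ)) *ᵥ v) ⬝ᵥ ((M ^ (j : ℕ)) *ᵥ v) := by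
      intro i j
      simp [Matrix.mul_apply, dotProduct, hPdef]
    have hGapp' : ∀ i j : Fin d, (P'ᵀ * P') i j = ((M' ^ (i : ℕ)) *ᵥ v') ⬝ᵥ ((M' ^ (j : ℕ)) *ᵥ v') := by
      intro i j
      simp [Matrix.mul_apply, dotProduct, hP'def]
    have hG : Pᵀ * P = P'ᵀ * P' := by
      ext i j
      rw [hGapp, hGapp']
      exact pear (i : ℕ) (j : ℕ) (by have := i.isLt; have := j.isLt; omega)
    set A : Matrix (Fin d) (Fin d) ℝ := P' * P⁻¹ with hAdef
    have hAT : Aᵀ = (Pᵀ)⁻¹ * P'ᵀ := by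
      rw [hAdef, Matrix.transpose_mul, Matrix.transpose_nonsing_inv]
    have hPTinv : (Pᵀ)⁻¹ * Pᵀ = 1 :=
      Matrix.nonsing_inv_mul Pᵀ (by rwa [Matrix.det_transpose])
    have hATP' : Aᵀ * P' = P := by
      rw [hAT, Matrix.mul_assoc, ← hG, ← Matrix.mul_assoc, hPTinv, Matrix.one_mul]
    have hP'TA : P'ᵀ * A = Pᵀ := by
      have h := congrArg Matrix.transpose hATP'
      rwa [Matrix.transpose_mul, Matrix.transpose_transpose] at h
    have hAT2 : Aᵀ = P * P'⁻¹ := by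
      have h := congrArg (fun X => X * P'⁻¹) hATP'
      simpa [Matrix.mul_assoc, hPP'] using h
    have hAO : A * Aᵀ = 1 := by
      rw [hAT2, hAdef]
      calc P' * P⁻¹ * (P * P'⁻¹) = P' * (P⁻¹ * P) * P'⁻¹ := by simp only [Matrix.mul_assoc]
        _ = 1 := by rw [hPP2, Matrix.mul_one, hPP']
    -- A maps v to v'
    have hAP : A * P = P' := by
      rw [hAdef, Matrix.mul_assoc, hPP2, Matrix.mul_one]
    have hAv : A *ᵥ v = v' := by
      have e0 : Fin d := ⟨0, by omega⟩
      have hPv : P *ᵥ Pi.single (⟨0, by omega⟩ : Fin d) 1 = v := by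
        ext j
        rw [Matrix.mulVec_single]
        simp [hPdef]
      have hP'v : P' *ᵥ Pi.single (⟨0, by omega⟩ : Fin d) 1 = v' := by
        ext j
        rw [Matrix.mulVec_single]
        simp [hP'def]
      rw [← hPv, mulVec_mulVec, hAP, hP'v]
    -- A conjugates M to M'
    have hMP : M * P = Matrix.of fun (a b : Fin d) => ((M ^ ((b : ℕ) + 1)) *ᵥ v) a := by
      ext a b
      show (M a) ⬝ᵥ (fun c => ((M ^ (b : ℕ)) *ᵥ v) c) = ((M ^ ((b : ℕ) + 1)) *ᵥ v) a
      have : (M *ᵥ ((M ^ (b : ℕ)) *ᵥ v)) a = ((M ^ ((b : ℕ) + 1)) *ᵥ v) a := by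
        rw [mulVec_mulVec, ← pow_succ']
      exact this
    have hMP' : M' * P' = Matrix.of fun (a b : Fin d) => ((M' ^ ((b : ℕ) + 1)) *ᵥ v') a := by
      ext a b
      show (M' a) ⬝ᵥ (fun c => ((M' ^ (b : ℕ)) *ᵥ v') c) = ((M' ^ ((b : ℕ) + 1)) *ᵥ v') a
      have : (M' *ᵥ ((M' ^ (b : ℕ)) *ᵥ v')) a = ((M' ^ ((b : ℕ) + 1)) *ᵥ v') a := by
        rw [mulVec_mulVec, ← pow_succ']
      exact this
    have key : Pᵀ * M * P = P'ᵀ * M' * P' := by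
      rw [Matrix.mul_assoc, Matrix.mul_assoc, hMP, hMP']
      ext i j
      have h1 : (Pᵀ * Matrix.of fun (a b : Fin d) => ((M ^ ((b : ℕ) + 1)) *ᵥ v) a) i j
          = ((M ^ (i : ℕ)) *ᵥ v) ⬝ᵥ ((M ^ ((j : ℕ) + 1)) *ᵥ v) := by
        simp [Matrix.mul_apply, dotProduct, hPdef]
      have h2 : (P'ᵀ * Matrix.of fun (a b : Fin d) => ((M' ^ ((b : ℕ) + 1)) *ᵥ v') a) i j
          = ((M' ^ (i : ℕ)) *ᵥ v') ⬝ᵥ ((M' ^ ((j : ℕ) + 1)) *ᵥ v') := by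
        simp [Matrix.mul_apply, dotProduct, hP'def]
      rw [h1, h2]
      exact pear (i : ℕ) ((j : ℕ) + 1) (by have := i.isLt; have := j.isLt; omega)
    have hAM : A * M * Aᵀ = M' := by
      have hmid : P'ᵀ * (A * M * Aᵀ) * P' = P'ᵀ * M' * P' := by
        calc P'ᵀ * (A * M * Aᵀ) * P' = (P'ᵀ * A) * M * (Aᵀ * P') := by
              simp only [Matrix.mul_assoc]
          _ = Pᵀ * M * P := by rw [hP'TA, hATP']
          _ = P'ᵀ * M' * P' := key
      have hl : IsUnit P'ᵀ.det := by rwa [Matrix.det_transpose]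
      have hPTinv' : (P'ᵀ)⁻¹ * P'ᵀ = 1 := Matrix.nonsing_inv_mul P'ᵀ hl
      have h1 := congrArg (fun Z => (P'ᵀ)⁻¹ * Z) hmid
      simp only [← Matrix.mul_assoc, hPTinv', Matrix.one_mul] at h1
      have h2 := congrArg (fun Z => Z * P'⁻¹) h1
      simp only [Matrix.mul_assoc, hPP', Matrix.mul_one] at h2
      rw [Matrix.mul_assoc]
      exact h2
    -- diagonality
    have hrevbij : Function.Bijective (Fin.rev : Fin d → Fin d) :=
      (Fin.revPerm : Equiv.Perm (Fin d)).bijective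
    have hone : (1 : Matrix (Fin d) (Fin d) ℝ).submatrix Fin.rev Fin.rev = 1 := by
      have := Matrix.submatrix_one_equiv (α := ℝ) (Fin.revPerm : Fin d ≃ Fin d)
      exact this
    have hQinv : Q⁻¹ = P⁻¹.submatrix id Fin.rev := by
      apply Matrix.inv_eq_right_inv
      calc Q * (P⁻¹.submatrix id Fin.rev)
          = (P * P⁻¹).submatrix Fin.rev Fin.rev :=
            (Matrix.submatrix_mul P P⁻¹ Fin.rev id Fin.rev Function.bijective_id).symm
        _ = 1 := by rw [hPP, hone]
    have hAr : A.submatrix Fin.rev Fin.rev = Q' * Q⁻¹ := by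
      rw [hQinv, hAdef]
      exact Matrix.submatrix_mul P' P⁻¹ Fin.rev id Fin.rev Function.bijective_id
    letI : Invertible Q := Q.invertibleOfIsUnitDet (isUnit_iff_ne_zero.mpr hdetQ)
    have hQinvTri : Q⁻¹.BlockTriangular id :=
      Matrix.blockTriangular_inv_of_blockTriangular hQtri
    have hArTri : (A.submatrix Fin.rev Fin.rev).BlockTriangular id := by
      rw [hAr]; exact hQ'tri.mul hQinvTri
    have hArO : (A.submatrix Fin.rev Fin.rev) * (A.submatrix Fin.rev Fin.rev)ᵀ = 1 := by
      rw [Matrix.transpose_submatrix,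
        ← Matrix.submatrix_mul A Aᵀ Fin.rev Fin.rev Fin.rev hrevbij, hAO, hone]
    have hArdet : IsUnit (A.submatrix Fin.rev Fin.rev).det := by
      apply IsUnit.of_mul_eq_one ((A.submatrix Fin.rev Fin.rev)ᵀ).det
      rw [← Matrix.det_mul, hArO, Matrix.det_one]
    letI : Invertible (A.submatrix Fin.rev Fin.rev) :=
      (A.submatrix Fin.rev Fin.rev).invertibleOfIsUnitDet hArdet
    have hArInv : (A.submatrix Fin.rev Fin.rev)⁻¹ = (A.submatrix Fin.rev Fin.rev)ᵀ :=
      Matrix.inv_eq_right_inv hArO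
    have hArTTri : ((A.submatrix Fin.rev Fin.rev)ᵀ).BlockTriangular id := by
      rw [← hArInv]
      exact Matrix.blockTriangular_inv_of_blockTriangular hArTri
    have hAdiag : ∀ i j : Fin d, i ≠ j → A i j = 0 := by
      intro i j hij
      have hA_eq : A i j = (A.submatrix Fin.rev Fin.rev) (Fin.rev i) (Fin.rev j) := by
        simp [Fin.rev_rev]
      rw [hA_eq]
      have hne : Fin.rev i ≠ Fin.rev j := fun h => hij (Fin.rev_injective h)
      rcases lt_or_gt_of_ne hne with h | h
      · have := hArTTri (show id (Fin.rev i) < id (Fin.rev j) from h)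
        simpa using this
      · exact hArTri (show id (Fin.rev j) < id (Fin.rev i) from h)
    have hApm : ∀ i : Fin d, A i i = 1 ∨ A i i = -1 := by
      intro i
      have h1 : (A * Aᵀ) i i = 1 := by rw [hAO]; simp
      have h2 : ∑ k, A i k * A i k = 1 := by
        simpa [Matrix.mul_apply] using h1
      rw [Finset.sum_eq_single i (fun k _ hk => by rw [hAdiag i k (Ne.symm hk), mul_zero])
        (fun hmem => absurd (Finset.mem_univ i) hmem)] at h2
      exact mul_self_eq_one_iff.mp h2
    exact ⟨A, hAdiag, hApm, hAO, hAv, hAM⟩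
  constructor
  · constructor
    · exact fwd
    · intro hinv
      obtain ⟨A, _, _, h1, h2, h3⟩ := bwd hinv
      exact ⟨A, h1, h2, h3⟩
  · intro hex
    exact bwd (fwd hex)
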